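/- arXiv:1209.6544 — 8 statements merged into one kernel-verified Lean document; each statement's English description precedes it below -/
import Mathlib

section
/- Let k be an algebraically closed field of characteristic zero. For P ∈ GL_2(k), one has Pᵀ·(0 −1; 1 1)·P = (0 −1; 1 1) if and only if P = (1 r; 0 1) or P = (−1 −r; 0 −1) for some r ∈ k, i.e. P = ±(1 r; 0 1). (This computes the congruence stabilizer of the matrix M_𝒥 = (0 −1; 1 1).) -/
open Matrix

theorem stmt_5 (k : Type*) [Field k] [IsAlgClosed k] [CharZero k]
    (P : Matrix (Fin 2) (Fin 2) k) (hP : IsUnit P) :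
    Pᵀ * !![(0 : k), -1; 1, 1] * P = !![(0 : k), -1; 1, 1] ↔
      ∃ r : k, P = !![1, r; 0, 1] ∨ P = !![-1, -r; 0, -1] := by
  constructor
  · intro h
    rw [Matrix.eta_fin_two P] at h
    set a := P 0 0 with ha
    set b := P 0 1 with hb
    set c := P 1 0 with hc
    set d := P 1 1 with hd
    have ht : (!![a, b; c, d])ᵀ = !![a, c; b, d] := by
      ext i j; fin_cases i <;> fin_cases j <;> rfl
    rw [ht] at h
    have h00 := congr_fun (congr_fun h 0) 0
    have h01 := congr_fun (congr_fun h 0) 1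
    have h11 := congr_fun (congr_fun h 1) 1
    simp [Matrix.mul_fin_two] at h00 h01 h11
    have hc0 : c = 0 := by
      have : c * c = 0 := by linear_combination h00
      rcases mul_eq_zero.mp this with h' | h' <;> exact h'
    have hdd : d = 1 ∨ d = -1 := by
      have : d * d = 1 := by linear_combination h11
      exact mul_self_eq_one_iff.mp this
    rcases hdd with hd1 | hd1
    · refine ⟨b, Or.inl ?_⟩
      have hA : a = 1 := by
        rw [hc0, hd1] at h01; linear_combination -h01
      rw [Matrix.eta_fin_two P, ← ha, ← hb, ← hc, ← hd, hA, hc0, hd1]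
    · refine ⟨-b, Or.inr ?_⟩
      have hA : a = -1 := by
        rw [hc0, hd1] at h01; linear_combination h01
      rw [Matrix.eta_fin_two P, ← ha, ← hb, ← hc, ← hd, hA, hc0, hd1]
      norm_num
  · rintro ⟨r, h | h⟩ <;> subst h <;>
      ext i j <;> fin_cases i <;> fin_cases j <;>
      simp [Matrix.mul_apply, Fin.sum_univ_succ]
end

section
/- Let k be an algebraically closed field of characteristic zero and let p, q ∈ k^×. The matrices M_p = (0 −1; p 0) and M_q = (0 −1; q 0) are congruent (i.e. there exists P ∈ GL_2(k) with Pᵀ·M_q·P = M_p) if and only if p = q or p = q⁻¹. -/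
open Matrix
theorem stmt_6 (k : Type*) [Field k] [IsAlgClosed k] [CharZero k]
    (p q : k) (hp : p ≠ 0) (hq : q ≠ 0) :
    (∃ P : Matrix (Fin 2) (Fin 2) k, IsUnit P ∧
        Pᵀ * !![(0 : k), -1; q, 0] * P = !![(0 : k), -1; p, 0]) ↔
      p = q ∨ p = q⁻¹ := by
  constructor
  · rintro ⟨P, hP, hEq⟩
    have hdet : P.det ≠ 0 := by
      intro h
      have := (Matrix.isUnit_iff_isUnit_det P).mp hP
      rw [h] at this; simp at this
    rw [Matrix.det_fin_two] at hdet
    have h00 := congrFun (congrFun hEq 0) 0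
    have h01 := congrFun (congrFun hEq 0) 1
    have h10 := congrFun (congrFun hEq 1) 0
    have h11 := congrFun (congrFun hEq 1) 1
    simp [Matrix.mul_apply, Fin.sum_univ_two] at h00 h01 h10 h11
    by_cases hq1 : q = 1
    · subst hq1
      left
      linear_combination -h10 - h01
    · have hac : P 0 0 * P 1 0 = 0 := by
        have h : (q - 1) * (P 0 0 * P 1 0) = 0 := by linear_combination h00
        rcases mul_eq_zero.mp h with h | h
        · exact absurd (by linear_combination h) hq1
        · exact h
      have hbd : P 0 1 * P 1 1 = 0 := by
        have h : (q - 1) * (P 0 1 * P 1 1) = 0 := by linear_combination h11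
        rcases mul_eq_zero.mp h with h | h
        · exact absurd (by linear_combination h) hq1
        · exact h
      rcases mul_eq_zero.mp hac with ha | hc
      · -- a = 0, so b,c ≠ 0, d = 0
        have hb : P 0 1 ≠ 0 := by
          intro h; apply hdet; rw [ha, h]; ring
        have hd : P 1 1 = 0 := by
          rcases mul_eq_zero.mp hbd with h | h
          · exact absurd h hb
          · exact h
        right
        have hbc : q * (P 0 1 * P 1 0) = -1 := by linear_combination h01 + P 1 1 * ha
        field_simp
        linear_combination -q * h10 - hbc + q * q * P 1 1 * ha
      · -- c = 0
        have hd : P 1 1 ≠ 0 := by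
          intro h; apply hdet; rw [hc, h]; ring
        have hb : P 0 1 = 0 := by
          rcases mul_eq_zero.mp hbd with h | h
          · exact h
          · exact absurd h hd
        left
        have had : P 0 0 * P 1 1 = 1 := by linear_combination -h01 + P 1 0 * q * hb
        linear_combination -h10 + q * had - P 0 1 * hc
  · rintro (rfl | rfl)
    · exact ⟨1, isUnit_one, by simp⟩
    · refine ⟨!![0, 1; -q⁻¹, 0], ?_, ?_⟩
      · rw [Matrix.isUnit_iff_isUnit_det, Matrix.det_fin_two_of]
        simp [hq]
      · ext i j
        fin_cases i <;> fin_cases j <;>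
          simp [Matrix.mul_apply, Fin.sum_univ_two, Matrix.transpose_apply, Matrix.vecHead, Matrix.vecTail] <;> field_simp
end

section
/- Let k be an algebraically closed field of characteristic zero and n ≥ 2. If M ∈ M_n(k) and P ∈ 𝒫_n, then sf(PᵀMP) = sf(Pᵀ·sf(M)·P). -/
open Matrix

/-- The homogeneous block (top-left `(n-1)×(n-1)` block) of an `n×n` matrix. -/
def homBlock {k : Type*} [Field k] {m : ℕ}
    (M : Matrix (Fin (m + 1)) (Fin (m + 1)) k) : Matrix (Fin m) (Fin m) k :=
  M.submatrix Fin.castSucc Fin.castSucc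

/-- The standard-form map `sf`, sending `(M₁ M₂; M₃ᵀ m)` to `(M₁ M₂+M₃; 0 m)`. -/
def sf {k : Type*} [Field k] {m : ℕ}
    (M : Matrix (Fin (m + 1)) (Fin (m + 1)) k) : Matrix (Fin (m + 1)) (Fin (m + 1)) k :=
  Matrix.of fun i j =>
    if i = Fin.last m then (if j = Fin.last m then M i j else 0)
    else if j = Fin.last m then M i j + M j i
    else M i j

/-- Membership in `𝒫_n`: block form `(P₁ P₂; 0 1)` with `P₁ ∈ GL_{n-1}(k)`. -/
def memP {k : Type*} [Field k] {m : ℕ}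
    (P : Matrix (Fin (m + 1)) (Fin (m + 1)) k) : Prop :=
  IsUnit (homBlock P) ∧ P (Fin.last m) (Fin.last m) = 1 ∧
    ∀ j : Fin m, P (Fin.last m) (Fin.castSucc j) = 0

/-- Standard-form congruence. -/
def SfCongruent {k : Type*} [Field k] {m : ℕ}
    (M N : Matrix (Fin (m + 1)) (Fin (m + 1)) k) : Prop :=
  ∃ P : Matrix (Fin (m + 1)) (Fin (m + 1)) k, memP P ∧
    ∃ α : k, α ≠ 0 ∧ sf M = α • sf (Pᵀ * N * P)

lemma conj_vmv {k : Type*} [Field k] {m : ℕ} (A : Matrix (Fin (m+1)) (Fin (m+1)) k)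
    (u v : Fin (m+1) → k) :
    Aᵀ * vecMulVec u v * A = vecMulVec (Aᵀ *ᵥ u) (v ᵥ* A) := by
  ext i j
  simp [mul_apply, vecMulVec_apply, mulVec, vecMul, dotProduct, Finset.sum_mul,
    Finset.mul_sum, mul_assoc, transpose_apply]
  try rw [Finset.sum_comm]

lemma sf_add {k : Type*} [Field k] {m : ℕ} (X Y : Matrix (Fin (m+1)) (Fin (m+1)) k) :
    sf (X + Y) = sf X + sf Y := by
  ext i j
  simp only [sf, of_apply, Matrix.add_apply]
  split_ifs <;> first | ring | simp

lemma sf_skew {k : Type*} [Field k] {m : ℕ} (v : Fin (m+1) → k) :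
    sf (vecMulVec v (Pi.single (Fin.last m) 1) - vecMulVec (Pi.single (Fin.last m) 1) v)
      = (0 : Matrix (Fin (m+1)) (Fin (m+1)) k) := by
  ext i j
  simp only [sf, of_apply, Matrix.sub_apply, vecMulVec_apply, Matrix.zero_apply]
  split_ifs with h1 h2 h2 <;>
    simp_all [Pi.single_apply] <;> try ring

lemma sf_decomp {k : Type*} [Field k] {m : ℕ} (M : Matrix (Fin (m+1)) (Fin (m+1)) k) :
    sf M = M + (vecMulVec (fun a => if a = Fin.last m then 0 else M (Fin.last m) a)
        (Pi.single (Fin.last m) 1)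
      - vecMulVec (Pi.single (Fin.last m) 1)
        (fun a => if a = Fin.last m then 0 else M (Fin.last m) a)) := by
  ext i j
  simp only [sf, of_apply, Matrix.add_apply, Matrix.sub_apply, vecMulVec_apply]
  split_ifs with h1 h2 h2 <;> simp_all [Pi.single_apply] <;> ring

theorem stmt_8 (k : Type*) [Field k] [IsAlgClosed k] [CharZero k]
    (m : ℕ) (hm : 1 ≤ m)
    (M P : Matrix (Fin (m + 1)) (Fin (m + 1)) k) (hP : memP P) :
    sf (Pᵀ * M * P) = sf (Pᵀ * sf M * P) := by
  obtain ⟨-, hP1, hP0⟩ := hP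
  set e : Fin (m+1) → k := Pi.single (Fin.last m) 1 with he
  set u : Fin (m+1) → k := fun a => if a = Fin.last m then 0 else M (Fin.last m) a with hu
  have heP : e ᵥ* P = e := by
    ext j
    simp only [he, vecMul, dotProduct, Pi.single_apply]
    rw [Finset.sum_eq_single (Fin.last m)]
    · rcases eq_or_ne j (Fin.last m) with rfl | hj
      · simp [hP1]
      · obtain ⟨j', rfl⟩ := Fin.exists_castSucc_eq.2 hj
        simp [hP0 j', hj]
    · intro b _ hb; simp [hb]
    · simp
  have hv : Pᵀ *ᵥ u = u ᵥ* P := by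
    ext i
    simp [mulVec, vecMul, dotProduct, transpose_apply, mul_comm]
  have hPe : Pᵀ *ᵥ e = e := by
    rw [he]
    ext i
    simp only [mulVec, dotProduct, transpose_apply, Pi.single_apply]
    have := congrFun heP i
    simpa [he, vecMul, dotProduct, Pi.single_apply, mul_comm] using this
  rw [sf_decomp M, mul_add, add_mul, sf_add, mul_sub, sub_mul,
    conj_vmv, conj_vmv, heP, hPe, hv]
  rw [sf_skew, add_zero]
end

section
/- Let k be an algebraically closed field of characteristic zero and n ≥ 2. Let M, N ∈ M_n(k) both have homogeneous block L ∈ M_{n−1}(k). If P ∈ 𝒫_n, with top-left block P₁ ∈ GL_{n−1}(k), satisfies sf(M) = α·sf(PᵀNP) for some α ∈ k^×, then there exist γ ∈ k^× and Q₁ ∈ GL_{n−1}(k) with Q₁ᵀ·L·Q₁ = L such that P₁ = γ·Q₁. -/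
open Matrix

lemma homBlock_sf {k : Type*} [Field k] {m : ℕ}
    (M : Matrix (Fin (m + 1)) (Fin (m + 1)) k) :
    homBlock (sf M) = homBlock M := by
  ext i j
  simp [homBlock, sf, (Fin.castSucc_lt_last i).ne, (Fin.castSucc_lt_last j).ne]

lemma homBlock_conj {k : Type*} [Field k] {m : ℕ}
    (N P : Matrix (Fin (m + 1)) (Fin (m + 1)) k)
    (hlast : ∀ j : Fin m, P (Fin.last m) (Fin.castSucc j) = 0) :
    homBlock (Pᵀ * N * P) = (homBlock P)ᵀ * homBlock N * homBlock P := by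
  ext i j
  simp only [homBlock, submatrix_apply, mul_apply, transpose_apply]
  rw [Fin.sum_univ_castSucc]
  simp [hlast, Fin.sum_univ_castSucc]

lemma homBlock_smul {k : Type*} [Field k] {m : ℕ} (a : k)
    (M : Matrix (Fin (m + 1)) (Fin (m + 1)) k) :
    homBlock (a • M) = a • homBlock M := rfl

theorem stmt_11 (k : Type*) [Field k] [IsAlgClosed k] [CharZero k]
    (m : ℕ) (hm : 1 ≤ m) (L : Matrix (Fin m) (Fin m) k)
    (M N P : Matrix (Fin (m + 1)) (Fin (m + 1)) k)
    (hM : homBlock M = L) (hN : homBlock N = L)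
    (hP : memP P) (α : k) (hα : α ≠ 0)
    (h : sf M = α • sf (Pᵀ * N * P)) :
    ∃ (γ : k) (Q₁ : Matrix (Fin m) (Fin m) k), γ ≠ 0 ∧ IsUnit Q₁ ∧
      Q₁ᵀ * L * Q₁ = L ∧ homBlock P = γ • Q₁ := by

  obtain ⟨hP1, -, hlast⟩ := hP
  have key : L = α • ((homBlock P)ᵀ * L * homBlock P) := by
    have := congrArg homBlock h
    rwa [homBlock_sf, homBlock_smul, homBlock_sf, homBlock_conj N P hlast, hM, hN] at this
  obtain ⟨γ, hγ2⟩ := IsAlgClosed.exists_pow_nat_eq (α⁻¹) (n := 2) (by norm_num)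
  have hγ : γ ≠ 0 := by
    intro h0
    rw [h0] at hγ2
    simp at hγ2
    exact hα hγ2.symm
  refine ⟨γ, γ⁻¹ • homBlock P, hγ, ?_, ?_, by
    rw [smul_smul, mul_inv_cancel₀ hγ, one_smul]⟩
  · rcases hP1 with ⟨u, hu⟩
    exact ⟨⟨γ⁻¹ • u.val, γ • u.inv, by
        rw [smul_mul_smul_comm, inv_mul_cancel₀ hγ, u.val_inv, one_smul], by
        rw [smul_mul_smul_comm, mul_inv_cancel₀ hγ, u.inv_val, one_smul]⟩, by simp [hu]⟩
  · have hγi : γ⁻¹ * γ⁻¹ = α := by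
      field_simp
      rw [hγ2, inv_mul_cancel₀ hα]
    rw [transpose_smul, smul_mul_assoc, mul_smul_comm, smul_mul_assoc, smul_smul, hγi]
    exact key.symm
end

section
/- Let k be an algebraically closed field of characteristic zero. Every matrix M ∈ M_3(k) whose top-left 2×2 block is nonzero is standard-form congruent to one of the following matrices (rows listed in order): (1,0,0; 0,0,0; 0,0,0), (1,0,0; 0,0,0; 0,0,−1), (1,0,0; 0,0,1; 0,0,0), (0,0,0; 1,0,0; 0,0,0), (0,0,0; 1,0,0; 0,0,−1), (0,−1,0; 1,1,0; 0,0,0), (0,−1,0; 1,1,0; 0,0,1), (0,−1,1; 1,1,0; 0,0,0), (0,−1,0; q,0,0; 0,0,0) for some q ∈ k^×, (0,−1,0; q,0,0; 0,0,1) for some q ∈ k^×, or (0,−1,0; 1,0,1; 0,0,0). -/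
open Matrix

/-- The standard-form map `sf` on `3×3` matrices,
sending `(M₁ M₂; M₃ᵀ m)` to `(M₁ M₂+M₃; 0 m)`. -/
def sf3 {k : Type*} [Field k] (M : Matrix (Fin 3) (Fin 3) k) : Matrix (Fin 3) (Fin 3) k :=
  !![M 0 0, M 0 1, M 0 2 + M 2 0;
     M 1 0, M 1 1, M 1 2 + M 2 1;
     0, 0, M 2 2]

/-- Membership in `𝒫₃`: block form `(P₁ P₂; 0 1)` with `P₁ ∈ GL₂(k)`. -/
def memP3 {k : Type*} [Field k] (P : Matrix (Fin 3) (Fin 3) k) : Prop :=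
  IsUnit !![P 0 0, P 0 1; P 1 0, P 1 1] ∧ P 2 0 = 0 ∧ P 2 1 = 0 ∧ P 2 2 = 1

/-- Standard-form congruence on `3×3` matrices. -/
def SfCongruent3 {k : Type*} [Field k] (M N : Matrix (Fin 3) (Fin 3) k) : Prop :=
  ∃ P : Matrix (Fin 3) (Fin 3) k, memP3 P ∧
    ∃ α : k, α ≠ 0 ∧ sf3 M = α • sf3 (Pᵀ * N * P)

namespace Stmt12

variable {k : Type*} [Field k]

/-- Matrices in "standard shape". -/
def mkM (a b c d v1 v2 m : k) : Matrix (Fin 3) (Fin 3) k := !![a, b, v1; c, d, v2; 0, 0, m]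

lemma sf3_mkM (a b c d v1 v2 m : k) : sf3 (mkM a b c d v1 v2 m) = mkM a b c d v1 v2 m := by
  simp [sf3, mkM]

set_option maxHeartbeats 1000000 in
lemma sf3_conj (P N : Matrix (Fin 3) (Fin 3) k) (h0 : P 2 0 = 0) (h1 : P 2 1 = 0) :
    sf3 (Pᵀ * N * P) = sf3 (Pᵀ * sf3 N * P) := by
  ext i j
  fin_cases i <;> fin_cases j <;>
    simp [sf3, Matrix.mul_apply, Fin.sum_univ_three, h0, h1] <;> ring

lemma sf3_smul (β : k) (X : Matrix (Fin 3) (Fin 3) k) : sf3 (β • X) = β • sf3 X := by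
  ext i j
  fin_cases i <;> fin_cases j <;> simp [sf3, Matrix.smul_apply] <;> ring

set_option maxHeartbeats 1000000 in
lemma sfc_symm {M N : Matrix (Fin 3) (Fin 3) k} (h : SfCongruent3 M N) : SfCongruent3 N M := by
  obtain ⟨P, ⟨hU, h0, h1, h2⟩, α, hα, hMN⟩ := h
  have hD : P 0 0 * P 1 1 - P 0 1 * P 1 0 ≠ 0 := by
    rw [Matrix.isUnit_iff_isUnit_det, Matrix.det_fin_two, isUnit_iff_ne_zero] at hU
    simpa using hU
  set D := P 0 0 * P 1 1 - P 0 1 * P 1 0 with hDdef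
  set Q : Matrix (Fin 3) (Fin 3) k :=
    !![P 1 1/D, -P 0 1/D, -(P 1 1/D * P 0 2 - P 0 1/D * P 1 2);
       -P 1 0/D, P 0 0/D, -(-(P 1 0/D) * P 0 2 + P 0 0/D * P 1 2); 0,0,1] with hQdef
  have hQ0 : Q 2 0 = 0 := by simp [hQdef]
  have hQ1 : Q 2 1 = 0 := by simp [hQdef]
  have hPQ : P * Q = 1 := by
    ext i j
    fin_cases i <;> fin_cases j <;>
      simp [hQdef, Matrix.mul_apply, Fin.sum_univ_three, h0, h1, h2, Matrix.one_apply] <;>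
      field_simp <;> ring
  refine ⟨Q, ⟨?_, hQ0, hQ1, by simp [hQdef]⟩, α⁻¹, inv_ne_zero hα, ?_⟩
  · rw [Matrix.isUnit_iff_isUnit_det, Matrix.det_fin_two, isUnit_iff_ne_zero]
    simp only [hQdef]
    simp
    intro hcon
    apply hD
    field_simp at hcon
    linear_combination hcon
  · have e1 : sf3 (Qᵀ * M * Q) = sf3 (Qᵀ * sf3 M * Q) := sf3_conj Q M hQ0 hQ1
    rw [e1, hMN]
    have e2 : Qᵀ * (α • sf3 (Pᵀ * N * P)) * Q = α • (Qᵀ * sf3 (Pᵀ * N * P) * Q) := by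
      rw [Matrix.mul_smul, Matrix.smul_mul]
    rw [e2, sf3_smul, ← sf3_conj Q (Pᵀ * N * P) hQ0 hQ1]
    have e4 : Qᵀ * (Pᵀ * N * P) * Q = (P * Q)ᵀ * N * (P * Q) := by
      simp only [Matrix.transpose_mul, Matrix.mul_assoc]
    rw [e4, hPQ]
    simp [smul_smul, inv_mul_cancel₀ hα]

lemma memP3_mul {P Q : Matrix (Fin 3) (Fin 3) k} (hP : memP3 P) (hQ : memP3 Q) :
    memP3 (Q * P) := by
  obtain ⟨hP1, hP2, hP3, hP4⟩ := hP
  obtain ⟨hQ1, hQ2, hQ3, hQ4⟩ := hQ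
  refine ⟨?_, ?_, ?_, ?_⟩
  · have e : !![(Q * P) 0 0, (Q * P) 0 1; (Q * P) 1 0, (Q * P) 1 1] =
      !![Q 0 0, Q 0 1; Q 1 0, Q 1 1] * !![P 0 0, P 0 1; P 1 0, P 1 1] := by
      ext i j
      fin_cases i <;> fin_cases j <;>
        simp [Matrix.mul_apply, Fin.sum_univ_three, Fin.sum_univ_two, hP2, hP3]
    rw [e]
    exact hQ1.mul hP1
  · simp [Matrix.mul_apply, Fin.sum_univ_three, hP2, hQ2, hQ3, hQ4]
  · simp [Matrix.mul_apply, Fin.sum_univ_three, hP3, hQ2, hQ3, hQ4]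
  · simp [Matrix.mul_apply, Fin.sum_univ_three, hP2, hP3, hP4, hQ2, hQ3, hQ4]

lemma sfc_trans {M N L : Matrix (Fin 3) (Fin 3) k} (h1 : SfCongruent3 M N)
    (h2 : SfCongruent3 N L) : SfCongruent3 M L := by
  obtain ⟨P, hP, α, hα, hM⟩ := h1
  obtain ⟨Q, hQ, β, hβ, hN⟩ := h2
  refine ⟨Q * P, memP3_mul hP hQ, α * β, mul_ne_zero hα hβ, ?_⟩
  have e1 : sf3 (Pᵀ * N * P) = sf3 (Pᵀ * sf3 N * P) := sf3_conj P N hP.2.1 hP.2.2.1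
  have e2 : Pᵀ * (β • sf3 (Qᵀ * L * Q)) * P = β • (Pᵀ * sf3 (Qᵀ * L * Q) * P) := by
    rw [Matrix.mul_smul, Matrix.smul_mul]
  have e4 : Pᵀ * (Qᵀ * L * Q) * P = (Q * P)ᵀ * L * (Q * P) := by
    simp only [Matrix.transpose_mul, Matrix.mul_assoc]
  rw [hM, e1, hN, e2, sf3_smul, ← sf3_conj P (Qᵀ * L * Q) hP.2.1 hP.2.2.1, e4, smul_smul]

lemma sfc_refl (M : Matrix (Fin 3) (Fin 3) k) : SfCongruent3 M M := by
  refine ⟨1, ⟨?_, ?_, ?_, ?_⟩, 1, one_ne_zero, by simp⟩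
  · have e : !![(1 : Matrix (Fin 3) (Fin 3) k) 0 0, (1 : Matrix (Fin 3) (Fin 3) k) 0 1;
      (1 : Matrix (Fin 3) (Fin 3) k) 1 0, (1 : Matrix (Fin 3) (Fin 3) k) 1 1] =
      (1 : Matrix (Fin 2) (Fin 2) k) := by
      ext i j; fin_cases i <;> fin_cases j <;> simp [Matrix.one_apply]
    rw [e]; exact isUnit_one
  · simp [Matrix.one_apply]
  · simp [Matrix.one_apply]
  · simp [Matrix.one_apply]

set_option maxHeartbeats 1000000 in
lemma sfc_back {a b c d v1 v2 m a' b' c' d' v1' v2' m' : k} (p q r s x y α : k)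
    (hP : p * s - q * r ≠ 0) (hα : α ≠ 0)
    (e1 : a = α * (a'*p^2 + (b'+c')*p*r + d'*r^2))
    (e2 : b = α * (a'*p*q + b'*p*s + c'*q*r + d'*r*s))
    (e3 : c = α * (a'*p*q + b'*q*r + c'*p*s + d'*r*s))
    (e4 : d = α * (a'*q^2 + (b'+c')*q*s + d'*s^2))
    (e5 : v1 = α * (p*(v1' + 2*a'*x + (b'+c')*y) + r*(v2' + (b'+c')*x + 2*d'*y)))
    (e6 : v2 = α * (q*(v1' + 2*a'*x + (b'+c')*y) + s*(v2' + (b'+c')*x + 2*d'*y)))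
    (e7 : m = α * (m' + a'*x^2 + (b'+c')*x*y + d'*y^2 + v1'*x + v2'*y)) :
    SfCongruent3 (mkM a b c d v1 v2 m) (mkM a' b' c' d' v1' v2' m') := by
  refine ⟨!![p, q, x; r, s, y; 0, 0, 1], ⟨?_, by simp, by simp, by simp⟩, α, hα, ?_⟩
  · rw [Matrix.isUnit_iff_isUnit_det, isUnit_iff_ne_zero, Matrix.det_fin_two]
    simpa using hP
  · ext i j
    fin_cases i <;> fin_cases j <;>
      simp [sf3, mkM, Matrix.mul_apply, Fin.sum_univ_three, Matrix.smul_apply,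
        Matrix.vecHead, Matrix.vecTail]
    · linear_combination e1
    · linear_combination e2
    · linear_combination e5
    · linear_combination e3
    · linear_combination e4
    · linear_combination e6
    · linear_combination e7

/-- The key forward step: transforming the standard data `(a,b,c,d,v1,v2,m)` by
`P₁ = (p,q;r,s)`, `P₂ = (x,y)`, scalar `α`. -/
lemma step {a b c d v1 v2 m tA tB tC tD tV1 tV2 tm : k} (p q r s x y α : k)
    (hP : p * s - q * r ≠ 0) (hα : α ≠ 0)
    (e1 : tA = α * (a*p^2 + (b+c)*p*r + d*r^2))
    (e2 : tB = α * (a*p*q + b*p*s + c*q*r + d*r*s))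
    (e3 : tC = α * (a*p*q + b*q*r + c*p*s + d*r*s))
    (e4 : tD = α * (a*q^2 + (b+c)*q*s + d*s^2))
    (e5 : tV1 = α * (p*(v1 + 2*a*x + (b+c)*y) + r*(v2 + (b+c)*x + 2*d*y)))
    (e6 : tV2 = α * (q*(v1 + 2*a*x + (b+c)*y) + s*(v2 + (b+c)*x + 2*d*y)))
    (e7 : tm = α * (m + a*x^2 + (b+c)*x*y + d*y^2 + v1*x + v2*y)) :
    SfCongruent3 (mkM a b c d v1 v2 m) (mkM tA tB tC tD tV1 tV2 tm) :=
  sfc_symm (sfc_back p q r s x y α hP hα e1 e2 e3 e4 e5 e6 e7)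

/-- The goal predicate: `M` is congruent to one of the canonical forms. -/
def Goal (M : Matrix (Fin 3) (Fin 3) k) : Prop :=
    SfCongruent3 M !![(1 : k), 0, 0; 0, 0, 0; 0, 0, 0] ∨
    SfCongruent3 M !![(1 : k), 0, 0; 0, 0, 0; 0, 0, -1] ∨
    SfCongruent3 M !![(1 : k), 0, 0; 0, 0, 1; 0, 0, 0] ∨
    SfCongruent3 M !![(0 : k), 0, 0; 1, 0, 0; 0, 0, 0] ∨
    SfCongruent3 M !![(0 : k), 0, 0; 1, 0, 0; 0, 0, -1] ∨
    SfCongruent3 M !![(0 : k), -1, 0; 1, 1, 0; 0, 0, 0] ∨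
    SfCongruent3 M !![(0 : k), -1, 0; 1, 1, 0; 0, 0, 1] ∨
    SfCongruent3 M !![(0 : k), -1, 1; 1, 1, 0; 0, 0, 0] ∨
    (∃ q : k, q ≠ 0 ∧ SfCongruent3 M !![(0 : k), -1, 0; q, 0, 0; 0, 0, 0]) ∨
    (∃ q : k, q ≠ 0 ∧ SfCongruent3 M !![(0 : k), -1, 0; q, 0, 0; 0, 0, 1]) ∨
    SfCongruent3 M !![(0 : k), -1, 0; 1, 0, 1; 0, 0, 0]

lemma Goal_trans {M N : Matrix (Fin 3) (Fin 3) k} (h : SfCongruent3 M N) (hg : Goal N) :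
    Goal M := by
  rcases hg with h1|h1|h1|h1|h1|h1|h1|h1|⟨q,hq,h1⟩|⟨q,hq,h1⟩|h1
  · exact Or.inl (sfc_trans h h1)
  · exact Or.inr (Or.inl (sfc_trans h h1))
  · exact Or.inr (Or.inr (Or.inl (sfc_trans h h1)))
  · exact Or.inr (Or.inr (Or.inr (Or.inl (sfc_trans h h1))))
  · exact Or.inr (Or.inr (Or.inr (Or.inr (Or.inl (sfc_trans h h1)))))
  · exact Or.inr (Or.inr (Or.inr (Or.inr (Or.inr (Or.inl (sfc_trans h h1))))))
  · exact Or.inr (Or.inr (Or.inr (Or.inr (Or.inr (Or.inr (Or.inl (sfc_trans h h1)))))))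
  · exact Or.inr (Or.inr (Or.inr (Or.inr (Or.inr (Or.inr (Or.inr (Or.inl (sfc_trans h h1))))))))
  · exact Or.inr (Or.inr (Or.inr (Or.inr (Or.inr (Or.inr (Or.inr (Or.inr (Or.inl
      ⟨q, hq, sfc_trans h h1⟩))))))))
  · exact Or.inr (Or.inr (Or.inr (Or.inr (Or.inr (Or.inr (Or.inr (Or.inr (Or.inr (Or.inl
      ⟨q, hq, sfc_trans h h1⟩)))))))))
  · exact Or.inr (Or.inr (Or.inr (Or.inr (Or.inr (Or.inr (Or.inr (Or.inr (Or.inr (Or.inr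
      (sfc_trans h h1))))))))))

/-- canonical form shortcuts -/
lemma goal1 : Goal (mkM (1:k) 0 0 0 0 0 0) := Or.inl (sfc_refl _)
lemma goal2 : Goal (mkM (1:k) 0 0 0 0 0 (-1)) := Or.inr (Or.inl (sfc_refl _))
lemma goal3 : Goal (mkM (1:k) 0 0 0 0 1 0) := Or.inr (Or.inr (Or.inl (sfc_refl _)))
lemma goal4 : Goal (mkM (0:k) 0 1 0 0 0 0) := Or.inr (Or.inr (Or.inr (Or.inl (sfc_refl _))))
lemma goal5 : Goal (mkM (0:k) 0 1 0 0 0 (-1)) :=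
  Or.inr (Or.inr (Or.inr (Or.inr (Or.inl (sfc_refl _)))))
lemma goal6 : Goal (mkM (0:k) (-1) 1 1 0 0 0) :=
  Or.inr (Or.inr (Or.inr (Or.inr (Or.inr (Or.inl (sfc_refl _))))))
lemma goal7 : Goal (mkM (0:k) (-1) 1 1 0 0 1) :=
  Or.inr (Or.inr (Or.inr (Or.inr (Or.inr (Or.inr (Or.inl (sfc_refl _)))))))
lemma goal8 : Goal (mkM (0:k) (-1) 1 1 1 0 0) :=
  Or.inr (Or.inr (Or.inr (Or.inr (Or.inr (Or.inr (Or.inr (Or.inl (sfc_refl _))))))))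
lemma goal9 (q : k) (hq : q ≠ 0) : Goal (mkM (0:k) (-1) q 0 0 0 0) :=
  Or.inr (Or.inr (Or.inr (Or.inr (Or.inr (Or.inr (Or.inr (Or.inr (Or.inl
    ⟨q, hq, sfc_refl _⟩))))))))
lemma goal10 (q : k) (hq : q ≠ 0) : Goal (mkM (0:k) (-1) q 0 0 0 1) :=
  Or.inr (Or.inr (Or.inr (Or.inr (Or.inr (Or.inr (Or.inr (Or.inr (Or.inr (Or.inl
    ⟨q, hq, sfc_refl _⟩)))))))))
lemma goal11 : Goal (mkM (0:k) (-1) 1 0 0 1 0) :=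
  Or.inr (Or.inr (Or.inr (Or.inr (Or.inr (Or.inr (Or.inr (Or.inr (Or.inr (Or.inr
    (sfc_refl _))))))))))

end Stmt12
namespace Stmt12
variable {k : Type*} [Field k]

/-- Forms 4/5 from `(0,0,1,0,0,0,m)`. -/
lemma caseAD2'' (m : k) : Goal (mkM (0:k) 0 1 0 0 0 m) := by
  by_cases hm : m = 0
  · rw [hm]; exact goal4
  · refine Goal_trans (N := mkM 0 0 1 0 0 0 (-1))
      (step (-m) 0 0 1 0 0 (-1/m) (by simpa using hm) (by simp [hm]) ?_ ?_ ?_ ?_ ?_ ?_ ?_) goal5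
    all_goals (field_simp; try ring)

/-- Forms 4/5 from `(0,0,1,0,v1,v2,m)`. -/
lemma caseAD2' (v1 v2 m : k) : Goal (mkM (0:k) 0 1 0 v1 v2 m) := by
  refine Goal_trans (N := mkM 0 0 1 0 0 0 (m - v1*v2))
    (step 1 0 0 1 (-v2) (-v1) 1 (by norm_num) one_ne_zero
      (by ring) (by ring) (by ring) (by ring) (by ring) (by ring) (by ring)) (caseAD2'' _)

/-- Forms 9/10 from `(0,-1,q0,0,v1,v2,m)` with `q0 ≠ 0, 1`. -/
lemma caseAD1 (q0 V1 V2 m : k) (hq : q0 ≠ 0) (hq1 : q0 ≠ 1) :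
    Goal (mkM (0:k) (-1) q0 0 V1 V2 m) := by
  have hq1' : q0 - 1 ≠ 0 := sub_ne_zero.mpr hq1
  set m2 : k := m + (-1 + q0) * (-V2/(q0-1)) * (-V1/(q0-1)) + V1 * (-V2/(q0-1)) + V2 * (-V1/(q0-1))
    with hm2
  have h1 : SfCongruent3 (mkM (0:k) (-1) q0 0 V1 V2 m) (mkM 0 (-1) q0 0 0 0 m2) := by
    refine step 1 0 0 1 (-V2/(q0-1)) (-V1/(q0-1)) 1 (by norm_num) one_ne_zero
      (by ring) (by ring) (by ring) (by ring) ?_ ?_ (by rw [hm2]; ring)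
    · field_simp; ring
    · field_simp; ring
  by_cases hm : m2 = 0
  · rw [hm] at h1; exact Goal_trans h1 (goal9 q0 hq)
  · refine Goal_trans (sfc_trans h1 ?_) (goal10 q0 hq)
    refine step m2 0 0 1 0 0 (1/m2) (by simpa using hm) (by simp [hm]) ?_ ?_ ?_ ?_ ?_ ?_ ?_
    all_goals (field_simp; try ring)

/-- Forms 4/5/9/10 from antidiagonal data with `B + C ≠ 0`. -/
lemma caseAD (B C v1 v2 m : k) (hBC : B + C ≠ 0) : Goal (mkM (0:k) B C 0 v1 v2 m) := by
  by_cases hB : B = 0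
  · have hC : C ≠ 0 := by simpa [hB] using hBC
    refine Goal_trans (N := mkM 0 0 1 0 (v1/C) (v2/C) (m/C))
      (step 1 0 0 1 0 0 (1/C) (by norm_num) (by simp [hC]) ?_ ?_ ?_ ?_ ?_ ?_ ?_)
      (caseAD2' _ _ _) <;> (subst hB; field_simp) <;> ring
  · by_cases hC : C = 0
    · refine Goal_trans (N := mkM 0 0 1 0 (v2/B) (v1/B) (m/B))
        (step 0 1 1 0 0 0 (1/B) (by norm_num) (by simp [hB]) ?_ ?_ ?_ ?_ ?_ ?_ ?_)
        (caseAD2' _ _ _) <;> (subst hC; field_simp) <;> ring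
    · have hq : -C/B ≠ 0 := div_ne_zero (neg_ne_zero.mpr hC) hB
      have hq1 : -C/B ≠ 1 := by
        intro hcon
        apply hBC
        field_simp at hcon
        linear_combination -hcon
      refine Goal_trans (N := mkM 0 (-1) (-C/B) 0 (-v1/B) (-v2/B) (-m/B))
        (step 1 0 0 1 0 0 (-1/B) (by norm_num) (by simp [hB]) ?_ ?_ ?_ ?_ ?_ ?_ ?_)
        (caseAD1 _ _ _ _ hq hq1) <;> (field_simp; try ring)

end Stmt12

set_option maxHeartbeats 1000000

namespace Stmt12
variable {k : Type*} [Field k]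

lemma exists_sqrt [IsAlgClosed k] (t : k) : ∃ z : k, z^2 = t :=
  IsAlgClosed.exists_pow_nat_eq t (n := 2) (by norm_num)

/-- Forms 1/2/3 from `(1,0,0,0,v1,v2,m)`. -/
lemma caseE [IsAlgClosed k] [CharZero k] (v1 v2 m : k) : Goal (mkM (1:k) 0 0 0 v1 v2 m) := by
  have h1 : SfCongruent3 (mkM (1:k) 0 0 0 v1 v2 m) (mkM 1 0 0 0 0 v2 (m - v1^2/4)) := by
    refine step 1 0 0 1 (-v1/2) 0 1 (by norm_num) one_ne_zero
      (by ring) (by ring) (by ring) (by ring) ?_ (by ring) ?_ <;> (field_simp; try ring)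
  by_cases hv2 : v2 = 0
  · subst hv2
    by_cases hm : m - v1^2/4 = 0
    · rw [hm] at h1; exact Goal_trans h1 goal1
    · obtain ⟨p0, hp0⟩ := exists_sqrt (k := k) (-(m - v1^2/4))
      have hp0' : p0 ≠ 0 := by
        intro hcon; rw [hcon] at hp0; simp at hp0
        exact hm (by linear_combination hp0)
      have hm1' : m - v1^2/4 = -p0^2 := by linear_combination hp0
      rw [hm1'] at h1
      refine Goal_trans (sfc_trans h1 ?_) goal2
      refine step p0 0 0 1 0 0 (1/p0^2) (by simpa using hp0') (by simp [hp0'])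
        ?_ ?_ ?_ ?_ ?_ ?_ ?_
      all_goals (field_simp; try ring)
  · refine Goal_trans (sfc_trans h1 ?_) goal3
    refine step 1 0 0 (1/v2) 0 (-(m - v1^2/4)/v2) 1 (by simp [hv2]) one_ne_zero
      ?_ ?_ ?_ ?_ ?_ ?_ ?_
    all_goals (field_simp; try ring)

/-- Forms 6/7/8 from `(0,-1,1,1,v1,v2,m)`. -/
lemma caseF [IsAlgClosed k] [CharZero k] (v1 v2 m : k) : Goal (mkM (0:k) (-1) 1 1 v1 v2 m) := by
  by_cases hv1 : v1 = 0
  · subst hv1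
    have h1 : SfCongruent3 (mkM (0:k) (-1) 1 1 0 v2 m) (mkM 0 (-1) 1 1 0 0 (m - v2^2/4)) := by
      refine step 1 0 0 1 0 (-v2/2) 1 (by norm_num) one_ne_zero
        (by ring) (by ring) (by ring) (by ring) (by ring) ?_ ?_ <;> (field_simp; try ring)
    by_cases hm : m - v2^2/4 = 0
    · rw [hm] at h1; exact Goal_trans h1 goal6
    · obtain ⟨s0, hs0⟩ := exists_sqrt (k := k) (m - v2^2/4)
      have hs0' : s0 ≠ 0 := by
        intro hcon; rw [hcon] at hs0; simp at hs0; exact hm (by linear_combination -hs0)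
      rw [← hs0] at h1
      refine Goal_trans (sfc_trans h1 ?_) goal7
      refine step s0 0 0 s0 0 0 (1/s0^2) (by simpa using mul_ne_zero hs0' hs0')
        (by simp [hs0']) ?_ ?_ ?_ ?_ ?_ ?_ ?_
      all_goals (field_simp; try ring)
  · refine Goal_trans (N := mkM 0 (-1) 1 1 1 0 0) ?_ goal8
    refine step v1 0 0 v1 (-(m + (-v2/2)^2 + v2*(-v2/2))/v1) (-v2/2) (1/(v1*v1))
      (by simpa using mul_ne_zero hv1 hv1) (by simp [hv1]) ?_ ?_ ?_ ?_ ?_ ?_ ?_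
    all_goals (field_simp [hv1]; try ring)
    all_goals (try tauto)

/-- Forms 9/10/11 from `(0,b,-b,0,v1,v2,m)` with `b ≠ 0` (the `S = 0` case). -/
lemma caseS0 (b v1 v2 m : k) (hb : b ≠ 0) : Goal (mkM (0:k) b (-b) 0 v1 v2 m) := by
  by_cases hv1 : v1 = 0
  · by_cases hv2 : v2 = 0
    · subst hv1; subst hv2
      by_cases hm : m = 0
      · subst hm
        refine Goal_trans (N := mkM 0 (-1) 1 0 0 0 0)
          (step (-1/b) 0 0 1 0 0 1 (by simp [hb]) one_ne_zero ?_ ?_ ?_ ?_ ?_ ?_ ?_)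
          (goal9 1 one_ne_zero)
        all_goals (field_simp; try ring)
      · refine Goal_trans (N := mkM 0 (-1) 1 0 0 0 1)
          (step (-m/b) 0 0 1 0 0 (1/m) (by simp [hb, hm]) (by simp [hm]) ?_ ?_ ?_ ?_ ?_ ?_ ?_)
          (goal10 1 one_ne_zero)
        all_goals (field_simp; try ring)
    · subst hv1
      refine Goal_trans (N := mkM 0 (-1) 1 0 0 1 0)
        (step (-v2/b) 0 0 (1/v2) 0 (-m/v2) 1 ?_ one_ne_zero ?_ ?_ ?_ ?_ ?_ ?_ ?_) goal11
      · field_simp [hv2]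
        exact div_ne_zero (by simp) hb
      all_goals (field_simp [hv2]; try ring)
      all_goals (try tauto)
  · refine Goal_trans (N := mkM 0 (-1) 1 0 0 1 0)
      (step (-v2/b) (1/v1) (v1/b) 0 (-m/v1) 0 1 ?_ one_ne_zero ?_ ?_ ?_ ?_ ?_ ?_ ?_) goal11
    · field_simp [hv1]
      exact div_ne_zero (by simp) hb
    all_goals (field_simp [hv1]; try ring)
    all_goals (try tauto)

end Stmt12

namespace Stmt12
variable {k : Type*} [Field k]

lemma caseSwap (a b c d v1 v2 m : k) :
    SfCongruent3 (mkM a b c d v1 v2 m) (mkM d c b a v2 v1 m) :=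
  step 0 1 1 0 0 0 1 (by norm_num) one_ne_zero (by ring) (by ring) (by ring) (by ring)
    (by ring) (by ring) (by ring)

/-- The nondegenerate-symmetric-part case: `a ≠ 0`, `Δ ≠ 0`. -/
lemma caseC1 [IsAlgClosed k] [CharZero k] (a b c d v1 v2 m : k) (ha : a ≠ 0)
    (hΔ : (b+c)^2 - 4*a*d ≠ 0) : Goal (mkM a b c d v1 v2 m) := by
  obtain ⟨s0, hs0⟩ := exists_sqrt (k := k) ((b+c)^2 - 4*a*d)
  have hs0' : s0 ≠ 0 := by
    intro h; rw [h] at hs0; simp at hs0; exact hΔ (by linear_combination -hs0)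
  have h4 : 4*a*d = (b+c)^2 - s0^2 := by linear_combination hs0
  have hdet : (-(b+c)+s0) * (2*a) - (-(b+c)-s0) * (2*a) ≠ 0 := by
    have e : (-(b+c)+s0) * (2*a) - (-(b+c)-s0) * (2*a) = 4*a*s0 := by ring
    rw [e]
    exact mul_ne_zero (mul_ne_zero (by norm_num) ha) hs0'
  have hBC : 2*a*s0*((b-c) - s0) + (-(2*a*s0*((b-c) + s0))) ≠ 0 := by
    have e : 2*a*s0*((b-c) - s0) + (-(2*a*s0*((b-c) + s0))) = -(4*a*s0^2) := by ring
    rw [e]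
    exact neg_ne_zero.mpr (mul_ne_zero (mul_ne_zero (by norm_num) ha) (pow_ne_zero 2 hs0'))
  refine Goal_trans (N := mkM 0 (2*a*s0*((b-c) - s0)) (-(2*a*s0*((b-c) + s0))) 0
      ((-(b+c)+s0)*v1 + 2*a*v2) ((-(b+c)-s0)*v1 + 2*a*v2) m)
    (step (-(b+c)+s0) (-(b+c)-s0) (2*a) (2*a) 0 0 1 hdet one_ne_zero
      ?_ ?_ ?_ ?_ (by ring) (by ring) (by ring))
    (caseAD _ _ _ _ _ hBC)
  · linear_combination (-a) * h4
  · linear_combination (-a) * h4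
  · linear_combination (-a) * h4
  · linear_combination (-a) * h4

/-- The symmetric rank-one case. -/
lemma caseR1sym [IsAlgClosed k] [CharZero k] (a b d v1 v2 m : k)
    (hΔ : (b+b)^2 - 4*a*d = 0) (hA : ¬(a = 0 ∧ b = 0 ∧ d = 0)) :
    Goal (mkM a b b d v1 v2 m) := by
  by_cases ha : a = 0
  · have hb : b = 0 := by
      have h2 : (b+b)^2 = 0 := by rw [ha] at hΔ; linear_combination hΔ
      have h3 : b + b = 0 := by
        exact pow_eq_zero_iff (n := 2) (by norm_num) |>.mp h2
      linear_combination h3 / 2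
    subst ha; subst hb
    have hd : d ≠ 0 := fun h => hA ⟨rfl, rfl, h⟩
    refine Goal_trans (N := mkM 1 0 0 0 (v2/d) (v1/d) (m/d))
      (step 0 1 1 0 0 0 (1/d) (by norm_num) (by simp [hd]) ?_ ?_ ?_ ?_ ?_ ?_ ?_)
      (caseE _ _ _)
    all_goals (field_simp; try ring)
  · have hab : a*d = b*b := by linear_combination -hΔ/4
    refine Goal_trans (N := mkM 1 0 0 0 (v1/a) ((-b/a*v1 + v2)/a) (m/a))
      (step 1 (-b/a) 0 1 0 0 (1/a) (by simp [ha]) (by simp [ha]) ?_ ?_ ?_ ?_ ?_ ?_ ?_)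
      (caseE _ _ _)
    all_goals (field_simp [ha]; try ring)
    all_goals linear_combination (-1) * hab

/-- The nonsymmetric rank-one case. -/
lemma caseR1nonsym [IsAlgClosed k] [CharZero k] (a b c d v1 v2 m : k) (hbc : b ≠ c)
    (hΔ : (b+c)^2 - 4*a*d = 0) (had : a ≠ 0 ∨ d ≠ 0) : Goal (mkM a b c d v1 v2 m) := by
  by_cases ha : a = 0
  · have hd : d ≠ 0 := had.resolve_left (not_not_intro ha)
    have hσ : b + c = 0 := by
      refine pow_eq_zero_iff (n := 2) (by norm_num) |>.mp ?_
      rw [ha] at hΔ; linear_combination hΔ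
    have hc : c = -b := by linear_combination hσ
    subst hc; subst ha
    have hb : b ≠ 0 := by
      intro h; exact hbc (by rw [h]; ring)
    refine Goal_trans (N := mkM 0 (-1) 1 1 (-v1/b) (v2/d) (m/d))
      (step (-d/b) 0 0 1 0 0 (1/d) ?_ (by simp [hd]) ?_ ?_ ?_ ?_ ?_ ?_ ?_)
      (caseF _ _ _)
    · field_simp [hb]
      try exact hd
      exact div_ne_zero (by simpa using hd) hb
    all_goals (field_simp [hb, hd]; try ring)
  · have hB : c - b ≠ 0 := sub_ne_zero.mpr (Ne.symm hbc)
    have h4 : 4*a*d = (b+c)^2 := by linear_combination -hΔ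
    have h1 : SfCongruent3 (mkM a b c d v1 v2 m)
        (mkM 0 (c-b) (b-c) 1 ((-(b+c)*v1 + 2*a*v2)/a) (v1/a) (m/a)) := by
      refine step (-(b+c)) 1 (2*a) 0 0 0 (1/a) ?_ (by simp [ha]) ?_ ?_ ?_ ?_ ?_ ?_ ?_
      · have e : (-(b+c)) * 0 - 1 * (2*a) = -(2*a) := by ring
        rw [e]
        simpa using ha
      all_goals (field_simp [ha]; try ring)
      all_goals (try tauto)
      all_goals linear_combination (-1) * h4
    have h2 : SfCongruent3 (mkM (0:k) (c-b) (b-c) 1 ((-(b+c)*v1 + 2*a*v2)/a) (v1/a) (m/a))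
        (mkM 0 (-1) 1 1 (-((-(b+c)*v1 + 2*a*v2)/a)/(c-b)) (v1/a) (m/a)) := by
      refine step (-1/(c-b)) 0 0 1 0 0 1 ?_ one_ne_zero ?_ ?_ ?_ ?_ ?_ ?_ ?_
      · field_simp
        exact div_ne_zero (by simp) hB
      all_goals (field_simp [hB]; try ring)
      all_goals (try tauto)
    exact Goal_trans (sfc_trans h1 h2) (caseF _ _ _)

/-- The main classification on standard data. -/
lemma main [IsAlgClosed k] [CharZero k] (a b c d v1 v2 m : k)
    (hA : ¬(a = 0 ∧ b = 0 ∧ c = 0 ∧ d = 0)) : Goal (mkM a b c d v1 v2 m) := by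
  by_cases hΔ : (b+c)^2 - 4*a*d = 0
  · by_cases ha : a = 0
    · by_cases hd : d = 0
      · subst ha; subst hd
        have hσ : b + c = 0 := by
          refine pow_eq_zero_iff (n := 2) (by norm_num) |>.mp ?_
          linear_combination hΔ
        have hc : c = -b := by linear_combination hσ
        subst hc
        have hb : b ≠ 0 := fun h => hA ⟨rfl, h, by rw [h]; ring, rfl⟩
        exact caseS0 b v1 v2 m hb
      · by_cases hbc : b = c
        · subst hbc
          exact caseR1sym a b d v1 v2 m hΔ (fun ⟨_, _, h3⟩ => hd h3)
        · exact caseR1nonsym a b c d v1 v2 m hbc hΔ (Or.inr hd)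
    · by_cases hbc : b = c
      · subst hbc
        exact caseR1sym a b d v1 v2 m hΔ (fun ⟨h1, _, _⟩ => ha h1)
      · exact caseR1nonsym a b c d v1 v2 m hbc hΔ (Or.inl ha)
  · by_cases ha : a = 0
    · by_cases hd : d = 0
      · subst ha; subst hd
        refine caseAD b c v1 v2 m (fun h => hΔ ?_)
        linear_combination (b + c) * h
      · refine Goal_trans (caseSwap a b c d v1 v2 m) (caseC1 d c b a v2 v1 m hd ?_)
        intro h; exact hΔ (by linear_combination h)
    · exact caseC1 a b c d v1 v2 m ha hΔ

lemma sfc_of_sf3_eq {M M' N : Matrix (Fin 3) (Fin 3) k} (h : sf3 M = sf3 M')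
    (h2 : SfCongruent3 M' N) : SfCongruent3 M N := by
  obtain ⟨P, hP, α, hα, he⟩ := h2
  exact ⟨P, hP, α, hα, h.trans he⟩

lemma Goal_of_sf3_eq {M M' : Matrix (Fin 3) (Fin 3) k} (h : sf3 M = sf3 M') (hg : Goal M') :
    Goal M := by
  rcases hg with h1|h1|h1|h1|h1|h1|h1|h1|⟨q,hq,h1⟩|⟨q,hq,h1⟩|h1
  · exact Or.inl (sfc_of_sf3_eq h h1)
  · exact Or.inr (Or.inl (sfc_of_sf3_eq h h1))
  · exact Or.inr (Or.inr (Or.inl (sfc_of_sf3_eq h h1)))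
  · exact Or.inr (Or.inr (Or.inr (Or.inl (sfc_of_sf3_eq h h1))))
  · exact Or.inr (Or.inr (Or.inr (Or.inr (Or.inl (sfc_of_sf3_eq h h1)))))
  · exact Or.inr (Or.inr (Or.inr (Or.inr (Or.inr (Or.inl (sfc_of_sf3_eq h h1))))))
  · exact Or.inr (Or.inr (Or.inr (Or.inr (Or.inr (Or.inr (Or.inl (sfc_of_sf3_eq h h1)))))))
  · exact Or.inr (Or.inr (Or.inr (Or.inr (Or.inr (Or.inr (Or.inr (Or.inl
      (sfc_of_sf3_eq h h1))))))))
  · exact Or.inr (Or.inr (Or.inr (Or.inr (Or.inr (Or.inr (Or.inr (Or.inr (Or.inl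
      ⟨q, hq, sfc_of_sf3_eq h h1⟩))))))))
  · exact Or.inr (Or.inr (Or.inr (Or.inr (Or.inr (Or.inr (Or.inr (Or.inr (Or.inr (Or.inl
      ⟨q, hq, sfc_of_sf3_eq h h1⟩)))))))))
  · exact Or.inr (Or.inr (Or.inr (Or.inr (Or.inr (Or.inr (Or.inr (Or.inr (Or.inr (Or.inr
      (sfc_of_sf3_eq h h1))))))))))

end Stmt12

theorem stmt_12 (k : Type*) [Field k] [IsAlgClosed k] [CharZero k]
    (M : Matrix (Fin 3) (Fin 3) k)
    (hM1 : !![M 0 0, M 0 1; M 1 0, M 1 1] ≠ (0 : Matrix (Fin 2) (Fin 2) k)) :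
    SfCongruent3 M !![(1 : k), 0, 0; 0, 0, 0; 0, 0, 0] ∨
    SfCongruent3 M !![(1 : k), 0, 0; 0, 0, 0; 0, 0, -1] ∨
    SfCongruent3 M !![(1 : k), 0, 0; 0, 0, 1; 0, 0, 0] ∨
    SfCongruent3 M !![(0 : k), 0, 0; 1, 0, 0; 0, 0, 0] ∨
    SfCongruent3 M !![(0 : k), 0, 0; 1, 0, 0; 0, 0, -1] ∨
    SfCongruent3 M !![(0 : k), -1, 0; 1, 1, 0; 0, 0, 0] ∨
    SfCongruent3 M !![(0 : k), -1, 0; 1, 1, 0; 0, 0, 1] ∨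
    SfCongruent3 M !![(0 : k), -1, 1; 1, 1, 0; 0, 0, 0] ∨
    (∃ q : k, q ≠ 0 ∧ SfCongruent3 M !![(0 : k), -1, 0; q, 0, 0; 0, 0, 0]) ∨
    (∃ q : k, q ≠ 0 ∧ SfCongruent3 M !![(0 : k), -1, 0; q, 0, 0; 0, 0, 1]) ∨
    SfCongruent3 M !![(0 : k), -1, 0; 1, 0, 1; 0, 0, 0] := by
  have hA : ¬(M 0 0 = 0 ∧ M 0 1 = 0 ∧ M 1 0 = 0 ∧ M 1 1 = 0) := by
    rintro ⟨h1, h2, h3, h4⟩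
    apply hM1
    ext i j
    fin_cases i <;> fin_cases j <;> simp [h1, h2, h3, h4]
  have hg := Stmt12.main (M 0 0) (M 0 1) (M 1 0) (M 1 1) (M 0 2 + M 2 0) (M 1 2 + M 2 1)
    (M 2 2) hA
  have hsf : sf3 M = sf3 (Stmt12.mkM (M 0 0) (M 0 1) (M 1 0) (M 1 1) (M 0 2 + M 2 0)
      (M 1 2 + M 2 1) (M 2 2)) := by
    rw [Stmt12.sf3_mkM]
    rfl
  exact Stmt12.Goal_of_sf3_eq hsf hg
end

section
/- Let k be an algebraically closed field of characteristic zero and p, q ∈ k^×. The matrices W_p = (0,−1,0; p,0,0; 0,0,1) and W_q = (0,−1,0; q,0,0; 0,0,1) (rows listed in order) are standard-form congruent if and only if p = q or p = q⁻¹. -/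
open Matrix

theorem stmt_13 (k : Type*) [Field k] [IsAlgClosed k] [CharZero k]
    (p q : k) (hp : p ≠ 0) (hq : q ≠ 0) :
    SfCongruent3 !![(0 : k), -1, 0; p, 0, 0; 0, 0, 1]
        !![(0 : k), -1, 0; q, 0, 0; 0, 0, 1] ↔
      p = q ∨ p = q⁻¹ := by
  constructor
  · rintro ⟨P, ⟨hU, h20, h21, h22⟩, α, hα, heq⟩
    have hdet : P 0 0 * P 1 1 - P 0 1 * P 1 0 ≠ 0 := by
      rw [Matrix.isUnit_iff_isUnit_det, Matrix.det_fin_two_of, isUnit_iff_ne_zero] at hU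
      exact hU
    have key : ∀ i j : Fin 3, sf3 (!![(0:k),-1,0;p,0,0;0,0,1]) i j
        = α * sf3 (Pᵀ * !![(0:k),-1,0;q,0,0;0,0,1] * P) i j := by
      intro i j; rw [heq]; simp
    have e00 := key 0 0
    have e01 := key 0 1
    have e10 := key 1 0
    have e11 := key 1 1
    simp [sf3, Matrix.mul_apply, Fin.sum_univ_three, h20, h21, h22] at e00 e01 e10 e11
    replace e00 := e00.resolve_left hα
    replace e11 := e11.resolve_left hα
    by_cases hq1 : q = 1
    · left
      subst hq1
      linear_combination e10 + e01
    · have hq1' : q - 1 ≠ 0 := sub_ne_zero.mpr hq1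
      by_cases ha : P 0 0 = 0
      · -- a = 0 case: p = q⁻¹
        right
        have hb : P 0 1 ≠ 0 := by
          intro h; exact hdet (by rw [ha, h]; ring)
        have hd : P 1 1 = 0 := by
          have h : P 0 1 * (P 1 1 * (q - 1)) = 0 := by linear_combination e11
          rcases mul_eq_zero.mp h with h' | h'
          · exact absurd h' hb
          · exact (mul_eq_zero.mp h').resolve_right hq1'
        rw [ha] at e01 e10
        rw [hd] at e01 e10
        refine eq_inv_of_mul_eq_one_left ?_
        linear_combination q * e10 + e01
      · -- a ≠ 0 case: p = q
        left
        have hc : P 1 0 = 0 := by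
          have h : P 0 0 * (P 1 0 * (q - 1)) = 0 := by linear_combination e00
          exact (mul_eq_zero.mp ((mul_eq_zero.mp h).resolve_left ha)).resolve_right hq1'
        have hd : P 1 1 ≠ 0 := by
          intro h; exact hdet (by rw [hc, h]; ring)
        have hb : P 0 1 = 0 := by
          have h : P 0 1 * (P 1 1 * (q - 1)) = 0 := by linear_combination e11
          rcases mul_eq_zero.mp h with h' | h'
          · exact h'
          · exact absurd ((mul_eq_zero.mp h').resolve_right hq1') hd
        rw [hb] at e01 e10
        rw [hc] at e01 e10
        linear_combination e10 + q * e01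
  · rintro (rfl | rfl)
    · refine ⟨1, ⟨?_, ?_, ?_, ?_⟩, 1, one_ne_zero, by simp⟩
      · have : (1 : Matrix (Fin 3) (Fin 3) k) 0 0 = 1 := by simp
        simp only [Matrix.one_apply_eq, Matrix.one_apply_ne (by decide : (0:Fin 3) ≠ 1),
          Matrix.one_apply_ne (by decide : (1:Fin 3) ≠ 0)]
        rw [← Matrix.one_fin_two]
        exact isUnit_one
      · exact Matrix.one_apply_ne (by decide)
      · exact Matrix.one_apply_ne (by decide)
      · exact Matrix.one_apply_eq 2
    · refine ⟨!![0, 1, 0; -q⁻¹, 0, 0; 0, 0, 1], ⟨?_, rfl, rfl, rfl⟩,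
        1, one_ne_zero, ?_⟩
      · rw [Matrix.isUnit_iff_isUnit_det]
        simp [Matrix.det_fin_two_of, isUnit_iff_ne_zero, hq]
      · have hP : (!![0, 1, 0; -q⁻¹, 0, 0; 0, 0, 1] : Matrix (Fin 3) (Fin 3) k)ᵀ *
            !![(0 : k), -1, 0; q, 0, 0; 0, 0, 1] * !![0, 1, 0; -q⁻¹, 0, 0; 0, 0, 1] =
            !![(0 : k), -1, 0; q⁻¹, 0, 0; 0, 0, 1] := by
          ext i j
          fin_cases i <;> fin_cases j <;>
            simp [Matrix.mul_apply, Fin.sum_univ_three, Matrix.transpose_apply,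
              Matrix.vecHead, Matrix.vecTail] <;> field_simp
        rw [hP, one_smul]
end

section
/- Let k be an algebraically closed field of characteristic zero. The algebras 𝔘 = k⟨x,y | yx − xy + y⟩ and 𝔙 = k⟨x,y | yx − xy + y² + x⟩ are isomorphic as k-algebras. An isomorphism Φ : 𝔘 → 𝔙 is given on generators X, Y of 𝔘 by Φ(X) = −y and Φ(Y) = x + y², with inverse Ψ given by Ψ(x) = Y − X² and Ψ(y) = −X. -/
noncomputable section

/-- The generator `x` of the free algebra `k⟨x,y⟩`. -/
def X (k : Type*) [Field k] : FreeAlgebra k (Fin 2) := FreeAlgebra.ι k 0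

/-- The generator `y` of the free algebra `k⟨x,y⟩`. -/
def Y (k : Type*) [Field k] : FreeAlgebra k (Fin 2) := FreeAlgebra.ι k 1

/-- The relation identifying `f` with `0`. -/
def relOf (k : Type*) [Field k] (f : FreeAlgebra k (Fin 2)) :
    FreeAlgebra k (Fin 2) → FreeAlgebra k (Fin 2) → Prop :=
  fun a b => a = f ∧ b = 0

/-- `k⟨x, y | f⟩`: the free algebra on `x, y` modulo the two-sided ideal generated by `f`. -/
abbrev QuotAlg (k : Type*) [Field k] (f : FreeAlgebra k (Fin 2)) := RingQuot (relOf k f)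


section Aux

lemma aux_ring1 {R : Type*} [Ring R] (a b : R) :
    (a + b ^ 2) * -b - -b * (a + b ^ 2) + (a + b ^ 2) = b * a - a * b + b * b + a := by
  noncomm_ring

lemma aux_ring2 {R : Type*} [Ring R] (p q : R) :
    -p * (q - p ^ 2) - (q - p ^ 2) * -p + -p * -p + (q - p ^ 2) = q * p - p * q + q := by
  noncomm_ring

variable {k : Type*} [Field k]

lemma aux_ring3 {R : Type*} [Ring R] (a b : R) : a + b ^ 2 - (-b) ^ 2 = a := by
  noncomm_ring

lemma aux_ring4 {R : Type*} [Ring R] (p q : R) : q - p ^ 2 + (-p) ^ 2 = q := by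
  noncomm_ring

lemma mkAlgHom_rel_zero (f : FreeAlgebra k (Fin 2)) :
    RingQuot.mkAlgHom k (relOf k f) f = 0 := by
  have h := RingQuot.mkAlgHom_rel k (s := relOf k f) (x := f) (y := 0) ⟨rfl, rfl⟩
  simpa using h

end Aux

theorem stmt_15 (k : Type*) [Field k] [IsAlgClosed k] [CharZero k] :
    ∃ Φ : QuotAlg k (Y k * X k - X k * Y k + Y k) ≃ₐ[k]
        QuotAlg k (Y k * X k - X k * Y k + Y k * Y k + X k),
      Φ (RingQuot.mkAlgHom k (relOf k (Y k * X k - X k * Y k + Y k)) (X k)) =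
        -(RingQuot.mkAlgHom k (relOf k (Y k * X k - X k * Y k + Y k * Y k + X k)) (Y k)) ∧
      Φ (RingQuot.mkAlgHom k (relOf k (Y k * X k - X k * Y k + Y k)) (Y k)) =
        RingQuot.mkAlgHom k (relOf k (Y k * X k - X k * Y k + Y k * Y k + X k)) (X k) +
          (RingQuot.mkAlgHom k (relOf k (Y k * X k - X k * Y k + Y k * Y k + X k)) (Y k)) ^ 2 ∧
      Φ.symm (RingQuot.mkAlgHom k (relOf k (Y k * X k - X k * Y k + Y k * Y k + X k)) (X k)) =
        RingQuot.mkAlgHom k (relOf k (Y k * X k - X k * Y k + Y k)) (Y k) -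
          (RingQuot.mkAlgHom k (relOf k (Y k * X k - X k * Y k + Y k)) (X k)) ^ 2 ∧
      Φ.symm (RingQuot.mkAlgHom k (relOf k (Y k * X k - X k * Y k + Y k * Y k + X k)) (Y k)) =
        -(RingQuot.mkAlgHom k (relOf k (Y k * X k - X k * Y k + Y k)) (X k)) := by
  let fU := Y k * X k - X k * Y k + Y k
  let fV := Y k * X k - X k * Y k + Y k * Y k + X k
  let mU := RingQuot.mkAlgHom k (relOf k fU)
  let mV := RingQuot.mkAlgHom k (relOf k fV)
  have hU : mU (Y k) * mU (X k) - mU (X k) * mU (Y k) + mU (Y k) = 0 := by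
    have h := mkAlgHom_rel_zero (k := k) fU
    simpa [fU, map_add, map_sub, map_mul] using h
  have hV : mV (Y k) * mV (X k) - mV (X k) * mV (Y k) + mV (Y k) * mV (Y k) + mV (X k) = 0 := by
    have h := mkAlgHom_rel_zero (k := k) fV
    simpa [fV, map_add, map_sub, map_mul] using h
  let φ₀ : FreeAlgebra k (Fin 2) →ₐ[k] QuotAlg k fV :=
    FreeAlgebra.lift k ![-(mV (Y k)), mV (X k) + mV (Y k) ^ 2]
  have hφX : φ₀ (X k) = -(mV (Y k)) := by simp [φ₀, X]
  have hφY : φ₀ (Y k) = mV (X k) + mV (Y k) ^ 2 := by simp [φ₀, Y]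
  have hφf : φ₀ fU = 0 := by
    show φ₀ (Y k * X k - X k * Y k + Y k) = 0
    rw [map_add, map_sub, map_mul, map_mul, hφX, hφY, aux_ring1, hV]
  let ψ₀ : FreeAlgebra k (Fin 2) →ₐ[k] QuotAlg k fU :=
    FreeAlgebra.lift k ![mU (Y k) - mU (X k) ^ 2, -(mU (X k))]
  have hψX : ψ₀ (X k) = mU (Y k) - mU (X k) ^ 2 := by simp [ψ₀, X]
  have hψY : ψ₀ (Y k) = -(mU (X k)) := by simp [ψ₀, Y]
  have hψf : ψ₀ fV = 0 := by
    show ψ₀ (Y k * X k - X k * Y k + Y k * Y k + X k) = 0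
    rw [map_add, map_add, map_sub, map_mul, map_mul, map_mul, hψX, hψY, aux_ring2, hU]
  have hφrel : ∀ ⦃x y : FreeAlgebra k (Fin 2)⦄, relOf k fU x y → φ₀ x = φ₀ y := by
    rintro x y ⟨rfl, rfl⟩; simpa using hφf
  have hψrel : ∀ ⦃x y : FreeAlgebra k (Fin 2)⦄, relOf k fV x y → ψ₀ x = ψ₀ y := by
    rintro x y ⟨rfl, rfl⟩; simpa using hψf
  let Φ : QuotAlg k fU →ₐ[k] QuotAlg k fV := RingQuot.liftAlgHom k ⟨φ₀, hφrel⟩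
  let Ψ : QuotAlg k fV →ₐ[k] QuotAlg k fU := RingQuot.liftAlgHom k ⟨ψ₀, hψrel⟩
  have hΦX : Φ (mU (X k)) = -(mV (Y k)) := by
    rw [show Φ (mU (X k)) = φ₀ (X k) from RingQuot.liftAlgHom_mkAlgHom_apply k _ _ _, hφX]
  have hΦY : Φ (mU (Y k)) = mV (X k) + mV (Y k) ^ 2 := by
    rw [show Φ (mU (Y k)) = φ₀ (Y k) from RingQuot.liftAlgHom_mkAlgHom_apply k _ _ _, hφY]
  have hΨa : Ψ (mV (X k)) = mU (Y k) - mU (X k) ^ 2 := by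
    rw [show Ψ (mV (X k)) = ψ₀ (X k) from RingQuot.liftAlgHom_mkAlgHom_apply k _ _ _, hψX]
  have hΨb : Ψ (mV (Y k)) = -(mU (X k)) := by
    rw [show Ψ (mV (Y k)) = ψ₀ (Y k) from RingQuot.liftAlgHom_mkAlgHom_apply k _ _ _, hψY]
  have h1 : Φ.comp Ψ = AlgHom.id k (QuotAlg k fV) := by
    apply RingQuot.ringQuot_ext'
    apply FreeAlgebra.hom_ext
    funext i
    fin_cases i
    · show Φ (Ψ (mV (X k))) = mV (X k)
      rw [hΨa, map_sub, map_pow, hΦY, hΦX]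
      exact aux_ring3 _ _
    · show Φ (Ψ (mV (Y k))) = mV (Y k)
      rw [hΨb, map_neg, hΦX, neg_neg]
  have h2 : Ψ.comp Φ = AlgHom.id k (QuotAlg k fU) := by
    apply RingQuot.ringQuot_ext'
    apply FreeAlgebra.hom_ext
    funext i
    fin_cases i
    · show Ψ (Φ (mU (X k))) = mU (X k)
      rw [hΦX, map_neg, hΨb, neg_neg]
    · show Ψ (Φ (mU (Y k))) = mU (Y k)
      rw [hΦY, map_add, map_pow, hΨa, hΨb]
      exact aux_ring4 _ _
  refine ⟨AlgEquiv.ofAlgHom Φ Ψ h1 h2, hΦX, hΦY, ?_, ?_⟩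
  · show Ψ (mV (X k)) = _; exact hΨa
  · show Ψ (mV (Y k)) = _; exact hΨb
end
end

section
/- Let k be an algebraically closed field of characteristic zero. The four k-algebras A₁(k) = k⟨x,y | xy − yx − 1⟩ (the Weyl algebra), 𝔘 = k⟨x,y | yx − xy + y⟩, 𝒥 = k⟨x,y | yx − xy + y²⟩ (the Jordan plane), and 𝒥₁ = k⟨x,y | yx − xy + y² + 1⟩ (the deformed Jordan plane) are pairwise non-isomorphic as k-algebras. -/
noncomputable section

namespace Aux

/-- abelianization relation -/
def abRel (A : Type*) [Ring A] : A → A → Prop := fun a b => ∃ u v : A, a = u * v ∧ b = v * u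

abbrev Ab (A : Type*) [Ring A] := RingQuot (abRel A)

instance (A : Type*) [Ring A] : CommRing (Ab A) :=
  { (inferInstance : Ring (Ab A)) with
    mul_comm := by
      intro a b
      obtain ⟨u, rfl⟩ := RingQuot.mkRingHom_surjective (abRel A) a
      obtain ⟨v, rfl⟩ := RingQuot.mkRingHom_surjective (abRel A) b
      rw [← map_mul, ← map_mul]
      exact RingQuot.mkRingHom_rel ⟨u, v, rfl, rfl⟩ }

variable {k : Type*} [Field k]
variable {A B C : Type*} [Ring A] [Algebra k A] [Ring B] [Algebra k B] [Ring C] [Algebra k C]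

def mkAb (k : Type*) [Field k] (A : Type*) [Ring A] [Algebra k A] : A →ₐ[k] Ab A :=
  RingQuot.mkAlgHom k (abRel A)

lemma mkAb_surj : Function.Surjective (mkAb k A) := RingQuot.mkAlgHom_surjective k _

lemma mkAb_comm (u v : A) : mkAb k A (u * v) = mkAb k A (v * u) :=
  RingQuot.mkAlgHom_rel k ⟨u, v, rfl, rfl⟩

/-- lift to a commutative target -/
def abLift {C : Type*} [CommRing C] [Algebra k C] (f : A →ₐ[k] C) : Ab A →ₐ[k] C :=
  RingQuot.liftAlgHom k ⟨f, by rintro a b ⟨u, v, rfl, rfl⟩; rw [map_mul, map_mul, mul_comm]⟩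

@[simp] lemma abLift_mk {C : Type*} [CommRing C] [Algebra k C] (f : A →ₐ[k] C) (a : A) :
    abLift f (mkAb k A a) = f a :=
  RingQuot.liftAlgHom_mkAlgHom_apply _ _ _ _

def abMap (f : A →ₐ[k] B) : Ab A →ₐ[k] Ab B := abLift ((mkAb k B).comp f)

@[simp] lemma abMap_mk (f : A →ₐ[k] B) (a : A) : abMap f (mkAb k A a) = mkAb k B (f a) :=
  abLift_mk _ _

lemma ab_hom_ext {f g : Ab A →ₐ[k] C} (h : ∀ a, f (mkAb k A a) = g (mkAb k A a)) : f = g :=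
  RingQuot.ringQuot_ext' k _ _ (AlgHom.ext h)

/-- functoriality on equivs -/
def abCongr (e : A ≃ₐ[k] B) : Ab A ≃ₐ[k] Ab B :=
  AlgEquiv.ofAlgHom (abMap e.toAlgHom) (abMap e.symm.toAlgHom)
    (by apply ab_hom_ext; intro a; simp)
    (by apply ab_hom_ext; intro a; simp)


variable {k : Type*} [Field k]
variable {C : Type*} [Ring C] [Algebra k C]

def qMk (k : Type*) [Field k] (f : FreeAlgebra k (Fin 2)) : FreeAlgebra k (Fin 2) →ₐ[k] QuotAlg k f :=
  RingQuot.mkAlgHom k (relOf k f)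

lemma qMk_surj (f : FreeAlgebra k (Fin 2)) : Function.Surjective (qMk k f) :=
  RingQuot.mkAlgHom_surjective k _

lemma qMk_rel (f : FreeAlgebra k (Fin 2)) : qMk k f f = 0 := by
  have h := RingQuot.mkAlgHom_rel (S := k) (s := relOf k f) (x := f) (y := 0) ⟨rfl, rfl⟩
  rw [map_zero] at h
  exact h

/-- Build a hom out of `QuotAlg k f` from images of generators. -/
def qLift (f : FreeAlgebra k (Fin 2)) (a b : C)
    (h : FreeAlgebra.lift k ![a, b] f = 0) : QuotAlg k f →ₐ[k] C :=
  RingQuot.liftAlgHom k ⟨FreeAlgebra.lift k ![a, b], by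
    rintro u v ⟨rfl, rfl⟩; rw [h, map_zero]⟩

@[simp] lemma qLift_mk (f : FreeAlgebra k (Fin 2)) (a b : C) (h) (u : FreeAlgebra k (Fin 2)) :
    qLift f a b h (qMk k f u) = FreeAlgebra.lift k ![a, b] u :=
  RingQuot.liftAlgHom_mkAlgHom_apply _ _ _ _

@[simp] lemma qLift_X (f : FreeAlgebra k (Fin 2)) (a b : C) (h) :
    qLift f a b h (qMk k f (X k)) = a := by
  rw [qLift_mk]; simp [X]

@[simp] lemma qLift_Y (f : FreeAlgebra k (Fin 2)) (a b : C) (h) :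
    qLift f a b h (qMk k f (Y k)) = b := by
  rw [qLift_mk]; simp [Y]

lemma q_hom_ext {f : FreeAlgebra k (Fin 2)} {F G : QuotAlg k f →ₐ[k] C}
    (hx : F (qMk k f (X k)) = G (qMk k f (X k)))
    (hy : F (qMk k f (Y k)) = G (qMk k f (Y k))) : F = G := by
  apply RingQuot.ringQuot_ext' k
  apply FreeAlgebra.hom_ext
  funext i
  fin_cases i
  · exact hx
  · exact hy



end Aux

namespace Aux
variable {k : Type*} [Field k]
variable {C : Type*} [Ring C] [Algebra k C]

lemma abq_hom_ext {f : FreeAlgebra k (Fin 2)} {F G : Ab (QuotAlg k f) →ₐ[k] C}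
    (hx : F (mkAb k _ (qMk k f (X k))) = G (mkAb k _ (qMk k f (X k))))
    (hy : F (mkAb k _ (qMk k f (Y k))) = G (mkAb k _ (qMk k f (Y k)))) : F = G := by
  have h : F.comp (mkAb k _) = G.comp (mkAb k _) :=
    q_hom_ext (by simpa using hx) (by simpa using hy)
  exact ab_hom_ext fun a => AlgHom.congr_fun h a

/-- in the abelianization, `mk (u*v) = mk (v*u)` pushed through `qMk`. -/
lemma abq_comm {f : FreeAlgebra k (Fin 2)} (u v : FreeAlgebra k (Fin 2)) :
    mkAb k _ (qMk k f (u * v)) = mkAb k _ (qMk k f (v * u)) := by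
  have h := mkAb_comm (k := k) (qMk k f u) (qMk k f v)
  rwa [← map_mul, ← map_mul] at h

@[simp] lemma lift_X (a b : C) : FreeAlgebra.lift k ![a, b] (X k) = a := by
  simp [X]

@[simp] lemma lift_Y (a b : C) : FreeAlgebra.lift k ![a, b] (Y k) = b := by
  simp [Y]

lemma abq_rel (f : FreeAlgebra k (Fin 2)) : mkAb k _ (qMk k f f) = 0 := by
  rw [qMk_rel, map_zero]

section Main
variable (k)

/-- Abelianization of `U = k⟨x,y | yx-xy+y⟩` is `k[X]`. -/
def UIso : Ab (QuotAlg k (Y k * X k - X k * Y k + Y k)) ≃ₐ[k] Polynomial k := by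
  refine AlgEquiv.ofAlgHom
    (abLift (qLift _ Polynomial.X 0 (by simp [X, Y])))
    (Polynomial.aeval (mkAb k _ (qMk k _ (X k)))) ?_ ?_
  · apply Polynomial.algHom_ext
    simp
  · have hy : mkAb k _ (qMk k (Y k * X k - X k * Y k + Y k) (Y k)) = 0 := by
      have h0 := abq_rel (k := k) (Y k * X k - X k * Y k + Y k)
      rw [map_add, map_sub, map_add, map_sub, abq_comm (Y k) (X k)] at h0
      simpa using h0
    apply abq_hom_ext
    · simp
    · simp [hy]

end Main
end Aux
namespace Aux
section Main
variable (k : Type*) [Field k]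

open TrivSqZeroExt DualNumber

lemma eps_ne_zero' : (ε : DualNumber (Polynomial k)) ≠ 0 := by
  intro h
  have h2 := congrArg TrivSqZeroExt.snd h
  simp at h2

/-- y² = 0 in the abelianized Jordan plane. -/
lemma J_sq :
    mkAb k _ (qMk k (Y k * X k - X k * Y k + Y k * Y k) (Y k)) *
      mkAb k _ (qMk k (Y k * X k - X k * Y k + Y k * Y k) (Y k)) = 0 := by
  have h0 := abq_rel (k := k) (Y k * X k - X k * Y k + Y k * Y k)
  rw [map_add, map_sub, map_add, map_sub, abq_comm (Y k) (X k), map_mul, map_mul] at h0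
  simpa using h0

/-- The forward map from the abelianized Jordan plane to dual numbers. -/
def JF : Ab (QuotAlg k (Y k * X k - X k * Y k + Y k * Y k)) →ₐ[k] DualNumber (Polynomial k) :=
  abLift (qLift _ (TrivSqZeroExt.inl Polynomial.X) ε (by
    simp only [map_add, map_sub, map_mul, lift_X, lift_Y]
    rw [mul_comm]
    simp [DualNumber.eps_mul_eps]))

def JG : DualNumber (Polynomial k) →ₐ[k] Ab (QuotAlg k (Y k * X k - X k * Y k + Y k * Y k)) :=
  DualNumber.lift ⟨(Polynomial.aeval (mkAb k _ (qMk k _ (X k))),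
      mkAb k _ (qMk k _ (Y k))), J_sq k, fun _ => Commute.all _ _⟩

/-- Abelianization of the Jordan plane is the dual numbers over k[X]. -/
def JIso : Ab (QuotAlg k (Y k * X k - X k * Y k + Y k * Y k)) ≃ₐ[k] DualNumber (Polynomial k) := by
  refine AlgEquiv.ofAlgHom (JF k) (JG k) ?_ ?_
  · apply DualNumber.algHom_ext'
    · apply Polynomial.algHom_ext
      simp [JF, JG]
    · apply LinearMap.ext
      intro p
      simp only [LinearMap.coe_comp, Function.comp_apply, LinearMap.coe_restrictScalars,
        LinearMap.toSpanSingleton_apply, AlgHom.comp_toLinearMap, AlgHom.toLinearMap_apply,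
        AlgHom.coe_comp, AlgHom.id_apply, AlgHom.coe_id, id_eq]
      rw [JG, DualNumber.lift_smul, DualNumber.lift_apply_eps, map_mul (JF k),
        ← Polynomial.aeval_algHom_apply]
      simp only [JF, abLift_mk, qLift_X, qLift_Y]
      have h1 : (Polynomial.aeval (inl Polynomial.X : DualNumber (Polynomial k))) p
          = TrivSqZeroExt.inl p := by
        rw [show (inl Polynomial.X : DualNumber (Polynomial k)) =
          TrivSqZeroExt.inlAlgHom k (Polynomial k) (Polynomial k) Polynomial.X from rfl,
          Polynomial.aeval_algHom_apply, Polynomial.aeval_X_left_apply]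
        rfl
      rw [h1, inl_mul_eq_smul]
  · apply abq_hom_ext
    · simp [JF, JG]
    · simp [JF, JG]

lemma JIso_y :
    JIso k (mkAb k _ (qMk k (Y k * X k - X k * Y k + Y k * Y k) (Y k))) = ε := by
  show JF k _ = ε
  simp [JF]

end Main
end Aux
namespace Aux
section Main
variable (k : Type*) [Field k]

/-- The Weyl algebra admits no algebra map to `k`. -/
lemma weyl_no_hom (φ : QuotAlg k (X k * Y k - Y k * X k - 1) →ₐ[k] k) : False := by
  set ψ := φ.comp (qMk k (X k * Y k - Y k * X k - 1)) with hψ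
  have h : ψ (X k * Y k - Y k * X k - 1) = 0 := by
    rw [hψ, AlgHom.comp_apply, qMk_rel, map_zero]
  simp only [map_sub, map_mul, map_one] at h
  rw [mul_comm (ψ (Y k))] at h
  simp at h

variable {k} in
lemma no_iso_weyl {f : FreeAlgebra k (Fin 2)} (ψ : QuotAlg k f →ₐ[k] k)
    (e : QuotAlg k (X k * Y k - Y k * X k - 1) ≃ₐ[k] QuotAlg k f) : False :=
  weyl_no_hom k (ψ.comp e.toAlgHom)

def ψU : QuotAlg k (Y k * X k - X k * Y k + Y k) →ₐ[k] k :=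
  qLift _ 0 0 (by simp)

def ψJ : QuotAlg k (Y k * X k - X k * Y k + Y k * Y k) →ₐ[k] k :=
  qLift _ 0 0 (by simp)

variable {k} in
def ψJ1 (i : k) (hi : i * i = -1) :
    QuotAlg k (Y k * X k - X k * Y k + Y k * Y k + 1) →ₐ[k] k :=
  qLift _ 0 i (by
    simp only [map_add, map_sub, map_mul, map_one, lift_X, lift_Y]
    rw [hi]; ring)

variable {k} in
def ψJ1' (i : k) (hi : i * i = -1) :
    QuotAlg k (Y k * X k - X k * Y k + Y k * Y k + 1) →ₐ[k] k :=
  qLift _ 0 (-i) (by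
    simp only [map_add, map_sub, map_mul, map_one, lift_X, lift_Y]
    rw [neg_mul_neg, hi]; ring)

section J1
variable [CharZero k]
variable {k}

omit [CharZero k] in
/-- y² = -1 in the abelianized deformed Jordan plane. -/
lemma J1_sq :
    mkAb k _ (qMk k (Y k * X k - X k * Y k + Y k * Y k + 1) (Y k)) *
      mkAb k _ (qMk k (Y k * X k - X k * Y k + Y k * Y k + 1) (Y k)) = -1 := by
  set m := (mkAb k (QuotAlg k (Y k * X k - X k * Y k + Y k * Y k + 1))).comp
      (qMk k (Y k * X k - X k * Y k + Y k * Y k + 1)) with hm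
  have h0 : m (Y k * X k - X k * Y k + Y k * Y k + 1) = 0 := by
    rw [hm, AlgHom.comp_apply, qMk_rel, map_zero]
  have hc : m (Y k * X k) = m (X k * Y k) := by
    rw [hm, AlgHom.comp_apply, AlgHom.comp_apply]; exact abq_comm _ _
  simp only [map_add, map_sub, map_mul, map_one] at h0 hc
  show m (Y k) * m (Y k) = -1
  linear_combination h0 - hc

/-- The nontrivial idempotent in the abelianized deformed Jordan plane. -/
def eJ1 (i : k) : Ab (QuotAlg k (Y k * X k - X k * Y k + Y k * Y k + 1)) :=
  algebraMap k _ (2 : k)⁻¹ *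
    (1 - algebraMap k _ i * mkAb k _ (qMk k _ (Y k)))

lemma eJ1_idem (i : k) (hi : i * i = -1) :
    eJ1 i * eJ1 i = (eJ1 i : Ab (QuotAlg k (Y k * X k - X k * Y k + Y k * Y k + 1))) := by
  set u := mkAb k _ (qMk k (Y k * X k - X k * Y k + Y k * Y k + 1) (Y k)) with hu
  have h1 : u * u = -1 := J1_sq
  set q := algebraMap k (Ab (QuotAlg k (Y k * X k - X k * Y k + Y k * Y k + 1))) i with hq'
  have h2 : q * q = -1 := by
    rw [hq', ← map_mul, hi, map_neg, map_one]
  set c := algebraMap k (Ab (QuotAlg k (Y k * X k - X k * Y k + Y k * Y k + 1))) (2 : k)⁻¹ with hc'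
  have h3 : c * 2 = 1 := by
    have h4 : ((2 : k)⁻¹ * 2 : k) = 1 := by norm_num
    rw [hc', show ((2 : Ab (QuotAlg k (Y k * X k - X k * Y k + Y k * Y k + 1)))) =
      algebraMap k _ (2 : k) by rw [map_ofNat], ← map_mul, h4, map_one]
  show c * (1 - q * u) * (c * (1 - q * u)) = c * (1 - q * u)
  linear_combination (c * c * q * q) * h1 - (c * c) * h2 + (c * (1 - q * u)) * h3

lemma eJ1_ne_zero (i : k) (hi : i * i = -1) :
    (eJ1 i : Ab (QuotAlg k (Y k * X k - X k * Y k + Y k * Y k + 1))) ≠ 0 := by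
  intro h
  have h' := congrArg (abLift (ψJ1 i hi)) h
  rw [map_zero, eJ1, map_mul, map_sub, map_mul, map_one,
    AlgHom.commutes, AlgHom.commutes,
    show abLift (ψJ1 i hi) (mkAb k _ (qMk k _ (Y k))) = i from by
      rw [abLift_mk]; exact qLift_Y _ _ _ _] at h'
  simp only [Algebra.algebraMap_self_apply] at h'
  rw [hi] at h'
  norm_num at h'

lemma eJ1_ne_one (i : k) (hi : i * i = -1) :
    (eJ1 i : Ab (QuotAlg k (Y k * X k - X k * Y k + Y k * Y k + 1))) ≠ 1 := by
  intro h
  have h' := congrArg (abLift (ψJ1' i hi)) h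
  rw [map_one, eJ1, map_mul, map_sub, map_mul, map_one,
    AlgHom.commutes, AlgHom.commutes,
    show abLift (ψJ1' i hi) (mkAb k _ (qMk k _ (Y k))) = -i from by
      rw [abLift_mk]; exact qLift_Y _ _ _ _] at h'
  simp only [Algebra.algebraMap_self_apply] at h'
  rw [mul_neg, hi] at h'
  norm_num at h'

end J1

/-- idempotents in dual numbers over a domain are trivial -/
lemma dual_idem {R : Type*} [CommRing R] [IsDomain R] (d : DualNumber R)
    (h : d * d = d) : d = 0 ∨ d = 1 := by
  have hf : d.fst * d.fst = d.fst := by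
    have := congrArg TrivSqZeroExt.fst h
    simpa using this
  have hs := congrArg TrivSqZeroExt.snd h
  rw [TrivSqZeroExt.snd_mul] at hs
  have hf01 : d.fst = 0 ∨ d.fst = 1 := by
    rcases mul_eq_zero.mp (by linear_combination hf : d.fst * (d.fst - 1) = 0) with h' | h'
    · exact Or.inl h'
    · exact Or.inr (by linear_combination h')
  rcases hf01 with h' | h'
  · left
    ext
    · simp [h']
    · rw [h'] at hs
      simpa using hs.symm
  · right
    ext
    · simp [h']
    · rw [h'] at hs
      simp only [one_smul, MulOpposite.op_one] at hs
      have h2 : d.snd + d.snd = d.snd := by simpa using hs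
      have h0 : d.snd = 0 := by linear_combination h2
      simp [h0]

end Main
end Aux
open Aux in
theorem stmt_17 (k : Type*) [Field k] [IsAlgClosed k] [CharZero k] :
    IsEmpty (QuotAlg k (X k * Y k - Y k * X k - 1) ≃ₐ[k]
      QuotAlg k (Y k * X k - X k * Y k + Y k)) ∧
    IsEmpty (QuotAlg k (X k * Y k - Y k * X k - 1) ≃ₐ[k]
      QuotAlg k (Y k * X k - X k * Y k + Y k * Y k)) ∧
    IsEmpty (QuotAlg k (X k * Y k - Y k * X k - 1) ≃ₐ[k]
      QuotAlg k (Y k * X k - X k * Y k + Y k * Y k + 1)) ∧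
    IsEmpty (QuotAlg k (Y k * X k - X k * Y k + Y k) ≃ₐ[k]
      QuotAlg k (Y k * X k - X k * Y k + Y k * Y k)) ∧
    IsEmpty (QuotAlg k (Y k * X k - X k * Y k + Y k) ≃ₐ[k]
      QuotAlg k (Y k * X k - X k * Y k + Y k * Y k + 1)) ∧
    IsEmpty (QuotAlg k (Y k * X k - X k * Y k + Y k * Y k) ≃ₐ[k]
      QuotAlg k (Y k * X k - X k * Y k + Y k * Y k + 1)) := by
  obtain ⟨i, hi⟩ : ∃ z : k, z * z = -1 := by
    obtain ⟨z, hz⟩ := IsAlgClosed.exists_pow_nat_eq (-1 : k) (n := 2) (by norm_num)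
    exact ⟨z, by rw [← hz]; ring⟩
  refine ⟨⟨fun e => no_iso_weyl (ψU k) e⟩, ⟨fun e => no_iso_weyl (ψJ k) e⟩,
    ⟨fun e => no_iso_weyl (ψJ1 i hi) e⟩, ⟨fun e => ?_⟩, ⟨fun e => ?_⟩, ⟨fun e => ?_⟩⟩
  · -- U vs Jordan plane
    let T := (abCongr e.symm).trans (UIso k)
    set y' := mkAb k _ (qMk k (Y k * X k - X k * Y k + Y k * Y k) (Y k)) with hy'
    have hy0 : y' ≠ 0 := fun h => eps_ne_zero' k (by rw [← JIso_y k, ← hy', h, map_zero])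
    have h2 : T y' * T y' = 0 := by rw [← map_mul, hy', J_sq k, map_zero]
    exact hy0 (T.injective (by rw [mul_self_eq_zero.mp h2, map_zero]))
  · -- U vs deformed Jordan plane
    let T := (abCongr e.symm).trans (UIso k)
    have hidem : T (eJ1 i) * T (eJ1 i) = T (eJ1 i) := by rw [← map_mul, eJ1_idem i hi]
    have h01 : T (eJ1 i) = 0 ∨ T (eJ1 i) = 1 := by
      rcases mul_eq_zero.mp (show T (eJ1 i) * (T (eJ1 i) - 1) = 0 from by
        linear_combination hidem) with h | h
      · exact Or.inl h
      · exact Or.inr (by linear_combination h)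
    rcases h01 with h | h
    · exact eJ1_ne_zero i hi (T.injective (by rw [h, map_zero]))
    · exact eJ1_ne_one i hi (T.injective (by rw [h, map_one]))
  · -- Jordan plane vs deformed Jordan plane
    let T := (abCongr e.symm).trans (JIso k)
    have hidem : T (eJ1 i) * T (eJ1 i) = T (eJ1 i) := by rw [← map_mul, eJ1_idem i hi]
    rcases dual_idem _ hidem with h | h
    · exact eJ1_ne_zero i hi (T.injective (by rw [h, map_zero]))
    · exact eJ1_ne_one i hi (T.injective (by rw [h, map_one]))
end
end
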